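/- Let N = pq with p, q ≥ 1, let a : {0,…,N−1} → ℂ, let μ ∈ ℤ, M ≥ 0, and ε > 0. Suppose Q : ℝ → ℂ is a function such that |Q(x) − e^{πi x}| ≤ ε for all real x with |x| ≤ M/p. For each integer m, define the estimate ℰ(â)_m = Σ_{k=0}^{p-1} Σ_{l=0}^{q-1} a_{qk+l} · e^{πi v_l μ} · Q(v_l (m − μ)) · e^{-2πi m k/p} · e^{-πi m/p}, where v_l = −2(l − q/2)/N. Then for every integer m with |m − μ| ≤ M, |â_m − ℰ(â)_m| ≤ (Σ_{n=0}^{N-1} |a_n|) · ε, where â_m = Σ_{n=0}^{N-1} a_n e^{-2πi m n/N}. -/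

import Mathlib

open Complex Real

lemma sum_range_mul_split {β : Type*} [AddCommMonoid β] (p q : ℕ) (f : ℕ → β) :
    ∑ n ∈ Finset.range (p * q), f n
      = ∑ k ∈ Finset.range p, ∑ l ∈ Finset.range q, f (q * k + l) := by
  rw [← Finset.sum_product']
  apply Finset.sum_nbij' (i := fun n => (n / q, n % q)) (j := fun x => q * x.1 + x.2)
  · intro n hn
    simp only [Finset.mem_range] at hn
    have hq0 : 0 < q := by
      rcases Nat.eq_zero_or_pos q with h | h
      · simp [h] at hn
      · exact h
    simp only [Finset.mem_product, Finset.mem_range]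
    exact ⟨Nat.div_lt_of_lt_mul (Nat.mul_comm p q ▸ hn), Nat.mod_lt _ hq0⟩
  · intro x hx
    simp only [Finset.mem_product, Finset.mem_range] at hx
    simp only [Finset.mem_range]
    calc q * x.1 + x.2 < q * x.1 + q := by omega
      _ = q * (x.1 + 1) := by ring
      _ ≤ q * p := Nat.mul_le_mul_left _ (by omega)
      _ = p * q := Nat.mul_comm _ _
  · intro n hn
    simp [Nat.div_add_mod]
  · intro x hx
    simp only [Finset.mem_product, Finset.mem_range] at hx
    have hq0 : 0 < q := by omega
    have h1 : (q * x.1 + x.2) / q = x.1 := by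
      rw [Nat.mul_add_div hq0, Nat.div_eq_of_lt hx.2, Nat.add_zero]
    have h2 : (q * x.1 + x.2) % q = x.2 := by
      rw [Nat.mul_add_mod, Nat.mod_eq_of_lt hx.2]
    exact Prod.ext h1 h2
  · intro n hn
    simp [Nat.div_add_mod]

theorem pft_error_bound (p q N : ℕ) (hp : 1 ≤ p) (hq : 1 ≤ q) (hN : N = p * q)
    (a : ℕ → ℂ) (μ : ℤ) (M : ℝ) (hM : 0 ≤ M) (ε : ℝ) (hε : 0 < ε)
    (Q : ℝ → ℂ)
    (hQ : ∀ x : ℝ, |x| ≤ M / p → ‖Q x - Complex.exp (π * I * x)‖ ≤ ε)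
    (m : ℤ) (hm : |(m : ℝ) - μ| ≤ M) :
    ‖((∑ n ∈ Finset.range N, a n * Complex.exp (-2 * π * I * m * n / N)) -
          ∑ k ∈ Finset.range p, ∑ l ∈ Finset.range q,
            a (q * k + l) *
              Complex.exp (π * I * ((-2 * ((l : ℝ) - q / 2) / N : ℝ) : ℂ) * μ) *
              Q ((-2 * ((l : ℝ) - q / 2) / N) * ((m : ℝ) - μ)) *
              Complex.exp (-2 * π * I * m * k / p) *
              Complex.exp (-π * I * m / p))‖ ≤
      (∑ n ∈ Finset.range N, ‖a n‖) * ε := by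
  have hp0 : (0 : ℝ) < p := by exact_mod_cast hp
  have hq0 : (0 : ℝ) < q := by exact_mod_cast hq
  have hN0 : (0 : ℝ) < N := by rw [hN]; push_cast; positivity
  have hNc : (N : ℂ) ≠ 0 := by exact_mod_cast hN0.ne'
  have hpc : (p : ℂ) ≠ 0 := by exact_mod_cast hp0.ne'
  -- reindex both sums
  have hs1 : (∑ n ∈ Finset.range N, a n * Complex.exp (-2 * π * I * m * n / N))
      = ∑ k ∈ Finset.range p, ∑ l ∈ Finset.range q,
          a (q * k + l) * Complex.exp (-2 * π * I * m * ((q * k + l : ℕ) : ℂ) / N) := by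
    rw [show Finset.range N = Finset.range (p * q) from by rw [hN]]
    exact sum_range_mul_split p q (fun n => a n * Complex.exp (-2 * π * I * m * n / N))
  have hs2 : (∑ n ∈ Finset.range N, ‖a n‖)
      = ∑ k ∈ Finset.range p, ∑ l ∈ Finset.range q, ‖a (q * k + l)‖ := by
    rw [show Finset.range N = Finset.range (p * q) from by rw [hN]]
    exact sum_range_mul_split p q (fun n => ‖a n‖)
  rw [hs1, hs2]
  rw [← Finset.sum_sub_distrib]
  have key : ∀ k ∈ Finset.range p, ∀ l ∈ Finset.range q,
      ‖(a (q * k + l) * Complex.exp (-2 * π * I * m * ((q * k + l : ℕ) : ℂ) / N)) -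
          a (q * k + l) *
            Complex.exp (π * I * ((-2 * ((l : ℝ) - q / 2) / N : ℝ) : ℂ) * μ) *
            Q ((-2 * ((l : ℝ) - q / 2) / N) * ((m : ℝ) - μ)) *
            Complex.exp (-2 * π * I * m * k / p) *
            Complex.exp (-π * I * m / p)‖
        ≤ ‖a (q * k + l)‖ * ε := by
    intro k hk l hl
    simp only [Finset.mem_range] at hk hl
    set v : ℝ := -2 * ((l : ℝ) - q / 2) / N with hv
    have hvbound : |v * ((m : ℝ) - μ)| ≤ M / p := by
      rw [abs_mul]
      have h1 : |v| ≤ 1 / p := by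
        rw [hv, abs_div, abs_of_pos hN0]
        rw [div_le_div_iff₀ hN0 hp0]
        have : |(-2 : ℝ) * ((l : ℝ) - q / 2)| ≤ q := by
          rw [abs_mul]
          have hl' : (l : ℝ) ≤ q - 1 := by
            have : (l : ℝ) + 1 ≤ q := by exact_mod_cast hl
            linarith
          have hl0 : (0 : ℝ) ≤ l := Nat.cast_nonneg l
          have h2 : |(l : ℝ) - q / 2| ≤ q / 2 := by
            rw [abs_le]; constructor <;> linarith
          calc |(-2 : ℝ)| * |(l : ℝ) - q / 2| = 2 * |(l : ℝ) - q / 2| := by norm_num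
            _ ≤ 2 * (q / 2) := by linarith
            _ = q := by ring
        calc |(-2 : ℝ) * ((l : ℝ) - q / 2)| * p ≤ q * p := by
              apply mul_le_mul_of_nonneg_right this hp0.le
          _ = 1 * N := by rw [hN]; push_cast; ring
      calc |v| * |(m : ℝ) - μ| ≤ (1 / p) * M :=
            mul_le_mul h1 hm (abs_nonneg _) (by positivity)
        _ = M / p := by ring
    -- exponent identity
    have hexp : Complex.exp (-2 * π * I * m * ((q * k + l : ℕ) : ℂ) / N)
        = Complex.exp (π * I * (v : ℂ) * μ) * Complex.exp (π * I * ((v * ((m:ℝ) - μ) : ℝ) : ℂ))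
          * Complex.exp (-2 * π * I * m * k / p) * Complex.exp (-π * I * m / p) := by
      rw [← Complex.exp_add, ← Complex.exp_add, ← Complex.exp_add]
      congr 1
      have hNeq : (N : ℂ) = (p : ℂ) * q := by rw [hN]; push_cast; ring
      have hqc : (q : ℂ) ≠ 0 := by exact_mod_cast hq0.ne'
      rw [hv]
      push_cast
      rw [hNeq]
      simp only [div_eq_mul_inv, mul_inv]
      linear_combination (-2*(π:ℂ)*I*(m:ℂ)*(k:ℂ) - (π:ℂ)*I*(m:ℂ)) * ((p:ℂ))⁻¹ *
        (mul_inv_cancel₀ hqc)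
    have : (a (q * k + l) * Complex.exp (-2 * π * I * m * ((q * k + l : ℕ) : ℂ) / N)) -
          a (q * k + l) *
            Complex.exp (π * I * ((v : ℝ) : ℂ) * μ) *
            Q (v * ((m : ℝ) - μ)) *
            Complex.exp (-2 * π * I * m * k / p) *
            Complex.exp (-π * I * m / p)
        = a (q * k + l) * Complex.exp (π * I * (v : ℂ) * μ) *
            (Complex.exp (π * I * ((v * ((m:ℝ) - μ) : ℝ) : ℂ)) - Q (v * ((m : ℝ) - μ))) *
            Complex.exp (-2 * π * I * m * k / p) * Complex.exp (-π * I * m / p) := by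
      rw [hexp]; ring
    rw [this]
    rw [norm_mul, norm_mul, norm_mul, norm_mul]
    have habs1 : ‖Complex.exp (π * I * (v : ℂ) * μ)‖ = 1 := by
      rw [Complex.norm_exp]
      have : (π * I * (v : ℂ) * μ).re = 0 := by simp [mul_comm, mul_assoc]
      rw [this, Real.exp_zero]
    have habs2 : ‖Complex.exp (-2 * π * I * (m : ℂ) * k / p)‖ = 1 := by
      rw [Complex.norm_exp]
      have : (-2 * π * I * (m : ℂ) * k / p).re = 0 := by
        simp [Complex.div_re, Complex.mul_re, Complex.mul_im]
      rw [this, Real.exp_zero]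
    have habs3 : ‖Complex.exp (-π * I * (m : ℂ) / p)‖ = 1 := by
      rw [Complex.norm_exp]
      have : (-π * I * (m : ℂ) / p).re = 0 := by
        simp [Complex.div_re, Complex.mul_re, Complex.mul_im]
      rw [this, Real.exp_zero]
    rw [habs1, habs2, habs3]
    have hQ' : ‖Complex.exp (π * I * ((v * ((m:ℝ) - μ) : ℝ) : ℂ))
        - Q (v * ((m : ℝ) - μ))‖ ≤ ε := by
      rw [← norm_neg, neg_sub]
      exact hQ _ hvbound
    calc ‖a (q * k + l)‖ * 1 *
          ‖Complex.exp (π * I * ((v * ((m:ℝ) - μ) : ℝ) : ℂ)) - Q (v * ((m : ℝ) - μ))‖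
          * 1 * 1
        = ‖a (q * k + l)‖ *
          ‖Complex.exp (π * I * ((v * ((m:ℝ) - μ) : ℝ) : ℂ)) - Q (v * ((m : ℝ) - μ))‖ := by
          ring
      _ ≤ ‖a (q * k + l)‖ * ε := by
          apply mul_le_mul_of_nonneg_left hQ' (norm_nonneg _)
  refine le_trans (norm_sum_le _ _) ?_
  have hrhs : (∑ k ∈ Finset.range p, ∑ l ∈ Finset.range q, ‖a (q * k + l)‖) * ε
      = ∑ k ∈ Finset.range p, ∑ l ∈ Finset.range q, ‖a (q * k + l)‖ * ε := by
    rw [Finset.sum_mul]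
    exact Finset.sum_congr rfl fun k _ => by rw [Finset.sum_mul]
  rw [hrhs]
  apply Finset.sum_le_sum
  intro k hk
  rw [← Finset.sum_sub_distrib]
  refine le_trans (norm_sum_le _ _) ?_
  exact Finset.sum_le_sum fun l hl => key k hk l hl
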